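/- Let μ and v be positive integers. For a partition N of μ with distinct part values of multiplicities k₁, k₂−k₁, ..., k_l−k_{l−1} (and k_l total parts), set Ξ(v, N) = v!/((k₁)!(k₂−k₁)!⋯(k_l−k_{l−1})!(v−k_l)!) (which is 0 if k_l > v). Then Σ_{N ∈ 𝒫(μ)} Ξ(v, N) = C(v + μ − 1, μ), where 𝒫(μ) is the set of partitions of μ. -/

import Mathlib

open Multiset Finset Nat

section Helpers

set_option linter.unusedSectionVars false

variable {β : Type*} [DecidableEq β]


variable {β : Type*} [DecidableEq β]

lemma finite_perm_lists (M : Multiset β) : Finite {l : List β // (l : Multiset β) = M} := by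
  have h : {l : List β | (l : Multiset β) = M} ⊆ {l | l ∈ M.toList.permutations} := by
    intro l hl
    simp only [Set.mem_setOf_eq] at hl ⊢
    rw [List.mem_permutations, ← Multiset.coe_eq_coe, Multiset.coe_toList, hl]
  exact ((M.toList.permutations.finite_toSet).subset h).to_subtype

lemma nat_card_sigma' {ι : Type*} [Fintype ι] (F : ι → Type*) [∀ i, Finite (F i)] :
    Nat.card (Σ i, F i) = ∑ i, Nat.card (F i) := by
  haveI : ∀ i, Fintype (F i) := fun i => Fintype.ofFinite (F i)
  simp only [Nat.card_eq_fintype_card]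
  exact Fintype.card_sigma

lemma prod_factorial_erase (M : Multiset β) {b : β} (hb : b ∈ M) :
    ∏ c ∈ M.toFinset, (M.count c)! =
      M.count b * ∏ c ∈ (M.erase b).toFinset, ((M.erase b).count c)! := by
  have hsub : (M.erase b).toFinset ⊆ M.toFinset := by
    intro c hc
    simp only [Multiset.mem_toFinset] at hc ⊢
    exact Multiset.mem_of_mem_erase hc
  have h1 : ∏ c ∈ (M.erase b).toFinset, ((M.erase b).count c)! =
      ∏ c ∈ M.toFinset, ((M.erase b).count c)! := by
    refine Finset.prod_subset hsub fun c _ hc' => ?_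
    rw [Multiset.count_eq_zero.mpr (by simpa using hc'), Nat.factorial_zero]
  rw [h1, ← Finset.mul_prod_erase _ _ (Multiset.mem_toFinset.mpr hb),
      ← Finset.mul_prod_erase _ (fun c => ((M.erase b).count c)!) (Multiset.mem_toFinset.mpr hb),
      ← mul_assoc]
  congr 1
  · rw [Multiset.count_erase_self, ← Nat.mul_factorial_pred (Multiset.count_pos.mpr hb).ne']
  · exact Finset.prod_congr rfl fun c hc => by
      rw [Multiset.count_erase_of_ne (Finset.ne_of_mem_erase hc)]

def consFn (M : Multiset β)
    (x : Σ b : M.toFinset, {l : List β // (l : Multiset β) = M.erase b.1}) :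
    {l : List β // (l : Multiset β) = M} :=
  ⟨x.1.1 :: x.2.1, by
    rw [← Multiset.cons_coe, x.2.2, Multiset.cons_erase (Multiset.mem_toFinset.mp x.1.2)]⟩

lemma consFn_bijective (M : Multiset β) (hM0 : M ≠ 0) : Function.Bijective (consFn M) := by
  constructor
  · rintro ⟨⟨b, hb⟩, ⟨l, hl⟩⟩ ⟨⟨b', hb'⟩, ⟨l', hl'⟩⟩ h
    simp only [consFn, Subtype.mk.injEq, List.cons.injEq] at h
    obtain ⟨rfl, rfl⟩ := h
    rfl
  · rintro ⟨l, hl⟩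
    match l, hl with
    | [], hl => exact absurd hl.symm (by simpa using hM0)
    | b :: t, hl =>
      have hbM : b ∈ M := by
        rw [← hl, ← Multiset.cons_coe]; exact Multiset.mem_cons_self _ _
      have ht : (t : Multiset β) = M.erase b := by
        rw [← hl, ← Multiset.cons_coe, Multiset.erase_cons_head]
      exact ⟨⟨⟨b, Multiset.mem_toFinset.mpr hbM⟩, ⟨t, ht⟩⟩, rfl⟩

lemma card_lists_mul_prod_factorial :
    ∀ (n : ℕ) (M : Multiset β), Multiset.card M = n →
    Nat.card {l : List β // (l : Multiset β) = M} * ∏ c ∈ M.toFinset, (M.count c)! = n ! := by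
  intro n
  induction n with
  | zero =>
    intro M hM
    rw [Multiset.card_eq_zero] at hM
    subst hM
    haveI : Unique {l : List β // (l : Multiset β) = 0} := by
      refine ⟨⟨⟨[], rfl⟩⟩, fun l => Subtype.ext ?_⟩
      exact (Multiset.coe_eq_zero _).mp l.2
    simp [Nat.card_unique, Multiset.toFinset_zero]
  | succ n ih =>
    intro M hM
    have hM0 : M ≠ 0 := by rintro rfl; simp at hM
    haveI : ∀ b : M.toFinset, Finite {l : List β // (l : Multiset β) = M.erase b.1} :=
      fun b => finite_perm_lists _
    have hcard : Nat.card {l : List β // (l : Multiset β) = M}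
        = ∑ b ∈ M.toFinset, Nat.card {l : List β // (l : Multiset β) = M.erase b} := by
      rw [← Nat.card_congr (Equiv.ofBijective _ (consFn_bijective M hM0)), nat_card_sigma']
      exact Finset.sum_coe_sort M.toFinset
        (fun b => Nat.card {l : List β // (l : Multiset β) = M.erase b})
    rw [hcard, Finset.sum_mul]
    have step : ∀ b ∈ M.toFinset,
        Nat.card {l : List β // (l : Multiset β) = M.erase b} * ∏ c ∈ M.toFinset, (M.count c)!
        = M.count b * n ! := by
      intro b hb
      have hbM := Multiset.mem_toFinset.mp hb
      rw [prod_factorial_erase M hbM, ← mul_assoc, mul_comm (Nat.card _) (M.count b), mul_assoc,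
        ih _ (by rw [Multiset.card_erase_of_mem hbM, hM, Nat.pred_succ])]
    rw [Finset.sum_congr rfl step, ← Finset.sum_mul, Multiset.toFinset_sum_count_eq, hM,
      Nat.factorial_succ]

lemma univ_val_map_eq (n : ℕ) (f : Fin n → β) :
    (Finset.univ.val.map f : Multiset β) = ((List.finRange n).map f : List β) := by
  rw [Fin.univ_def]
  rfl

lemma len_eq {n : ℕ} {M : Multiset β} (hM : Multiset.card M = n) {l : List β}
    (hl : (l : Multiset β) = M) : n = l.length := by
  have := congrArg Multiset.card hl
  rw [Multiset.coe_card, hM] at this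
  exact this.symm

def fnListEquiv (n : ℕ) (M : Multiset β) (hM : Multiset.card M = n) :
    {f : Fin n → β // Finset.univ.val.map f = M} ≃ {l : List β // (l : Multiset β) = M} where
  toFun f := ⟨(List.finRange n).map f.1, by rw [← univ_val_map_eq]; exact f.2⟩
  invFun l := ⟨fun i => l.1.get (Fin.cast (len_eq hM l.2) i), by
    have key : List.map (fun i => l.1.get (Fin.cast (len_eq hM l.2) i)) (List.finRange n)
        = l.1 := by
      apply List.ext_get (by simp [← len_eq hM l.2])
      intro i h1 h2
      simp
    rw [univ_val_map_eq, key, l.2]⟩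
  left_inv f := by
    apply Subtype.ext
    funext i
    simp
  right_inv l := by
    apply Subtype.ext
    apply List.ext_get (by simp [← len_eq hM l.2])
    intro i h1 h2
    simp

end Helpers

/-- counts of elements outside support are 0; decomposition of the full count multiset -/
lemma claimA (v : ℕ) (m : Multiset (Fin v)) :
    (Finset.univ.val.map fun a => m.count a) =
      (m.toFinset.val.map fun a => m.count a) +
        Multiset.replicate (v - m.toFinset.card) 0 := by
  classical
  have h1 : m.toFinset = Finset.univ.filter (· ∈ m) := by
    ext a; simp [Multiset.mem_toFinset]
  have h2 : Finset.univ.val = Multiset.filter (· ∈ m) Finset.univ.val +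
      Multiset.filter (fun a => ¬ a ∈ m) Finset.univ.val :=
    (Multiset.filter_add_not _ _).symm
  conv_lhs => rw [h2]
  rw [Multiset.map_add]
  congr 1
  · rw [h1, Finset.filter_val]
  · rw [Multiset.eq_replicate]
    constructor
    · rw [Multiset.card_map]
      have := congrArg Multiset.card h2
      rw [Multiset.card_add] at this
      have hv : Multiset.card (Finset.univ.val : Multiset (Fin v)) = v := by simp
      have hfil : Multiset.card (Multiset.filter (· ∈ m) Finset.univ.val) = m.toFinset.card := by
        rw [h1]; rfl
      omega
    · intro b hb
      obtain ⟨a, ha, rfl⟩ := Multiset.mem_map.mp hb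
      rw [Multiset.mem_filter] at ha
      exact Multiset.count_eq_zero_of_notMem ha.2

def toPart {v μ : ℕ} (m : Sym (Fin v) μ) : Nat.Partition μ where
  parts := m.1.toFinset.val.map fun a => m.1.count a
  parts_pos := by
    intro i hi
    obtain ⟨a, ha, rfl⟩ := Multiset.mem_map.mp hi
    exact Multiset.count_pos.mpr (Multiset.mem_toFinset.mp ha)
  parts_sum := by
    show ∑ a ∈ m.1.toFinset, m.1.count a = μ
    rw [Multiset.toFinset_sum_count_eq, m.2]

lemma cancel_rep {P Q : Multiset ℕ} {a b : ℕ} (hP : ∀ x ∈ P, 0 < x) (hQ : ∀ x ∈ Q, 0 < x)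
    (h : P + Multiset.replicate a 0 = Q + Multiset.replicate b 0) : P = Q := by
  have hrep : ∀ n : ℕ, Multiset.filter (0 < ·) (Multiset.replicate n 0) = 0 := fun n =>
    Multiset.filter_eq_nil.mpr fun x hx => by simp [Multiset.eq_of_mem_replicate hx]
  have h2 := congrArg (Multiset.filter (0 < ·)) h
  rwa [Multiset.filter_add, Multiset.filter_add, Multiset.filter_eq_self.mpr hP,
    Multiset.filter_eq_self.mpr hQ, hrep, hrep, add_zero, add_zero] at h2

noncomputable def fiberEquiv {μ v : ℕ} (N : Nat.Partition μ) (hk : Multiset.card N.parts ≤ v) :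
    {m : Sym (Fin v) μ // toPart m = N} ≃
    {f : Fin v → ℕ // Finset.univ.val.map f
      = N.parts + Multiset.replicate (v - Multiset.card N.parts) 0} := by
  have parts_pos : ∀ {P : Multiset ℕ} (hP : P = N.parts), ∀ x ∈ P, 0 < x := by
    rintro P rfl x hx; exact N.parts_pos hx
  have tofun : ∀ m : {m : Sym (Fin v) μ // toPart m = N},
      (Finset.univ.val.map fun a => m.1.1.count a)
        = N.parts + Multiset.replicate (v - Multiset.card N.parts) 0 := by
    rintro ⟨⟨m, hm⟩, hN⟩
    have h1 : m.toFinset.val.map (fun a => m.count a) = N.parts := congrArg Nat.Partition.parts hN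
    have h2 : m.toFinset.card = Multiset.card N.parts := by
      rw [← h1, Multiset.card_map]; rfl
    rw [claimA, h1, h2]
  refine Equiv.ofBijective (fun m => ⟨fun a => m.1.1.count a, tofun m⟩) ⟨?_, ?_⟩
  · rintro ⟨⟨m, hm⟩, hN⟩ ⟨⟨m', hm'⟩, hN'⟩ h
    simp only [Subtype.mk.injEq] at h ⊢
    ext a
    exact congrFun h a
  · rintro ⟨f, hf⟩
    -- build the multiset with count function f
    set m₀ : Multiset (Fin v) := ∑ a : Fin v, Multiset.replicate (f a) a with hm₀
    have hcount : ∀ b, m₀.count b = f b := by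
      intro b
      rw [hm₀, Multiset.count_sum']
      simp [Multiset.count_replicate]
    have hsum : ∀ g : Fin v → ℕ, ∑ a, g a = (Finset.univ.val.map g).sum := fun g => rfl
    have hcard : Multiset.card m₀ = μ := by
      rw [hm₀]
      have : Multiset.card (∑ a : Fin v, Multiset.replicate (f a) a) = ∑ a, f a := by simp
      rw [this, hsum f, hf, Multiset.sum_add, Multiset.sum_replicate, smul_zero, add_zero,
        N.parts_sum]
    have hmap : (Finset.univ.val.map fun a => m₀.count a) = Finset.univ.val.map f :=
      Multiset.map_congr rfl fun a _ => hcount a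
    have hA := claimA v m₀
    rw [hmap, hf] at hA
    have hparts : m₀.toFinset.val.map (fun a => m₀.count a) = N.parts := by
      refine cancel_rep ?_ (parts_pos rfl) hA.symm
      intro x hx
      obtain ⟨a, ha, rfl⟩ := Multiset.mem_map.mp hx
      exact Multiset.count_pos.mpr (Multiset.mem_toFinset.mp ha)
    refine ⟨⟨⟨m₀, hcard⟩, ?_⟩, ?_⟩
    · exact Nat.Partition.ext hparts
    · apply Subtype.ext
      funext a
      exact hcount a

lemma prod_factorial_M0 {μ v : ℕ} (N : Nat.Partition μ) (hk : Multiset.card N.parts ≤ v) :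
    ∏ c ∈ (N.parts + Multiset.replicate (v - Multiset.card N.parts) 0).toFinset,
      ((N.parts + Multiset.replicate (v - Multiset.card N.parts) 0).count c)! =
    (∏ c ∈ N.parts.toFinset, (N.parts.count c)!) * (v - Multiset.card N.parts)! := by
  set r := v - Multiset.card N.parts with hr
  have h0 : (0 : ℕ) ∉ N.parts.toFinset := fun h =>
    lt_irrefl 0 (N.parts_pos (Multiset.mem_toFinset.mp h))
  rcases Nat.eq_zero_or_pos r with h | h
  · rw [h]
    simp
  · have ht : (N.parts + Multiset.replicate r 0).toFinset = insert 0 N.parts.toFinset := by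
      rw [Multiset.toFinset_add, Multiset.toFinset_replicate, if_neg (Nat.pos_iff_ne_zero.mp h),
        Finset.union_comm, ← Finset.insert_eq]
    rw [ht, Finset.prod_insert h0]
    have hc0 : (N.parts + Multiset.replicate r 0).count 0 = r := by
      rw [Multiset.count_add, Multiset.count_replicate_self,
        Multiset.count_eq_zero_of_notMem (fun hm => lt_irrefl 0 (N.parts_pos hm)), zero_add]
    have hcc : ∀ c ∈ N.parts.toFinset,
        ((N.parts + Multiset.replicate r 0).count c)! = (N.parts.count c)! := by
      intro c hc
      rw [Multiset.count_add, Multiset.count_replicate,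
        if_neg (fun hcz : 0 = c => h0 (hcz ▸ hc)), add_zero]
    rw [hc0, Finset.prod_congr rfl hcc, mul_comm]

/-- For a partition `N` of `μ`, `Ξ(v, N) = v!/((∏ distinct values c of N) (mult of c)!) ⋅
1/(v - #parts)!` — the multinomial coefficient, which is `0` if `N` has more than `v` parts.
Summing over all partitions of `μ`: `Σ_{N ∈ 𝒫(μ)} Ξ(v, N) = C(v + μ - 1, μ)`. -/
theorem stmt9 (μ v : ℕ) (hμ : 0 < μ) (hv : 0 < v) :
    (∑ N : Nat.Partition μ,
      if Multiset.card N.parts ≤ v then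
        Nat.factorial v /
          ((∏ c ∈ N.parts.toFinset, Nat.factorial (N.parts.count c)) *
            Nat.factorial (v - Multiset.card N.parts))
      else 0) = Nat.choose (v + μ - 1) μ := by
  classical
  have htotal : Fintype.card (Sym (Fin v) μ) = (v + μ - 1).choose μ := by
    rw [Sym.card_sym_eq_choose, Fintype.card_fin]
  rw [← htotal]
  have hfib : Fintype.card (Sym (Fin v) μ)
      = ∑ N : Nat.Partition μ,
        (Finset.univ.filter fun m : Sym (Fin v) μ => toPart m = N).card := by
    rw [← Finset.card_univ]
    exact Finset.card_eq_sum_card_fiberwise (f := toPart) (fun m _ => Finset.mem_univ _)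
  rw [hfib]
  refine Finset.sum_congr rfl fun N _ => ?_
  by_cases hk : Multiset.card N.parts ≤ v
  · rw [if_pos hk]
    have h1 : (Finset.univ.filter fun m : Sym (Fin v) μ => toPart m = N).card
        = Nat.card {m : Sym (Fin v) μ // toPart m = N} := by
      rw [Nat.card_eq_fintype_card, Fintype.card_subtype]
    set M₀ := N.parts + Multiset.replicate (v - Multiset.card N.parts) 0 with hM₀
    have hcardM₀ : Multiset.card M₀ = v := by
      rw [hM₀, Multiset.card_add, Multiset.card_replicate]
      omega
    haveI := finite_perm_lists (β := ℕ) M₀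
    have h2 : Nat.card {m : Sym (Fin v) μ // toPart m = N}
        = Nat.card {l : List ℕ // (l : Multiset ℕ) = M₀} :=
      Nat.card_congr ((fiberEquiv N hk).trans (fnListEquiv v M₀ hcardM₀))
    have h3 := card_lists_mul_prod_factorial v M₀ hcardM₀
    rw [hM₀, prod_factorial_M0 N hk] at h3
    have hDpos : 0 < (∏ c ∈ N.parts.toFinset, (N.parts.count c)!) *
        (v - Multiset.card N.parts)! :=
      mul_pos (Finset.prod_pos fun c _ => Nat.factorial_pos _) (Nat.factorial_pos _)
    rw [h1, h2]
    rw [hM₀]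
    exact Nat.div_eq_of_eq_mul_left hDpos h3.symm
  · rw [if_neg hk]
    symm
    rw [Finset.card_eq_zero, Finset.filter_eq_empty_iff]
    intro m _ hEq
    apply hk
    rw [← hEq]
    show Multiset.card (toPart m).parts ≤ v
    have hc : Multiset.card (toPart m).parts = m.1.toFinset.card := by
      show Multiset.card (m.1.toFinset.val.map _) = _
      rw [Multiset.card_map]
      rfl
    rw [hc]
    simpa using Finset.card_le_univ m.1.toFinset
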